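/- Suppose ρ on ℝⁿ has a linear differentiation representation (β, Σ, G) in which at least 3 coordinates of β are nonzero. Then there exist x, y, w, z ∈ ℝⁿ such that x >_D y, ¬(w >_D z), and ρ(x,y) < ρ(w,z). -/

import Mathlib

open Finset

/-- Dominance x >_D y with respect to attribute weights β. -/
def DomB {n : ℕ} (β x y : Fin n → ℝ) : Prop :=
  (∀ k, β k * y k ≤ β k * x k) ∧ ∃ k, β k * y k < β k * x k

/-- Linear differentiation representation (β, Σ, G). -/
def IsLDMRep {n : ℕ} (ρ : (Fin n → ℝ) → (Fin n → ℝ) → ℝ) (β : Fin n → ℝ)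
    (S : Matrix (Fin n) (Fin n) ℝ) (G : ℝ → ℝ) : Prop :=
  S.PosDef ∧ Continuous G ∧ StrictMono G ∧
  ∀ x y : Fin n → ℝ, x ≠ y →
    ρ x y = G ((∑ k, β k * (x k - y k)) /
      Real.sqrt (∑ i, ∑ j, (x i - y i) * S i j * (x j - y j)))

/-- auxiliary quadratic form -/
def quadQ {n : ℕ} (S : Matrix (Fin n) (Fin n) ℝ) (d : Fin n → ℝ) : ℝ :=
  ∑ i, ∑ j, d i * S i j * d j

lemma quadQ_pos {n : ℕ} {S : Matrix (Fin n) (Fin n) ℝ} (hS : S.PosDef)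
    {d : Fin n → ℝ} (hd : d ≠ 0) : 0 < quadQ S d := by
  have := hS.dotProduct_mulVec_pos hd
  simpa [quadQ, dotProduct, Matrix.mulVec, Finset.mul_sum, mul_assoc] using this

lemma quadQ_add {n : ℕ} (S : Matrix (Fin n) (Fin n) ℝ) (a b : Fin n → ℝ) :
    quadQ S (a + b) = quadQ S a + quadQ S b +
      ((∑ i, ∑ j, a i * S i j * b j) + (∑ i, ∑ j, b i * S i j * a j)) := by
  have h : ∀ i j : Fin n, (a + b) i * S i j * (a + b) j
      = a i * S i j * a j + b i * S i j * b j + (a i * S i j * b j + b i * S i j * a j) := by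
    intro i j; simp only [Pi.add_apply]; ring
  simp only [quadQ, h, Finset.sum_add_distrib]

lemma quadQ_sub {n : ℕ} (S : Matrix (Fin n) (Fin n) ℝ) (a b : Fin n → ℝ) :
    quadQ S (a - b) = quadQ S a + quadQ S b -
      ((∑ i, ∑ j, a i * S i j * b j) + (∑ i, ∑ j, b i * S i j * a j)) := by
  have h : ∀ i j : Fin n, (a - b) i * S i j * (a - b) j
      = a i * S i j * a j + b i * S i j * b j - (a i * S i j * b j + b i * S i j * a j) := by
    intro i j; simp only [Pi.sub_apply]; ring
  simp only [quadQ, h, Finset.sum_sub_distrib, Finset.sum_add_distrib]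

lemma key_lemma {n : ℕ} (ρ : (Fin n → ℝ) → (Fin n → ℝ) → ℝ)
    (β : Fin n → ℝ) (S : Matrix (Fin n) (Fin n) ℝ) (G : ℝ → ℝ)
    (hrep : IsLDMRep ρ β S G)
    (i j k : Fin n) (hij : i ≠ j) (hik : i ≠ k) (hjk : j ≠ k)
    (hβi : β i ≠ 0) (hβj : β j ≠ 0) (hβk : β k ≠ 0)
    (hBA : quadQ S (fun m => if m = j then (β j)⁻¹ else 0)
         ≤ quadQ S (fun m => if m = i then (β i)⁻¹ else 0)) :
    ∃ x y w z : Fin n → ℝ, DomB β x y ∧ ¬ DomB β w z ∧ ρ x y < ρ w z := by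
  obtain ⟨hS, hG, hGmono, hρ⟩ := hrep
  set d1 : Fin n → ℝ := fun m => if m = i then (β i)⁻¹ else 0 with hd1
  set d2 : Fin n → ℝ := fun m => if m = j then (β j)⁻¹ else 0 with hd2
  set d3 : Fin n → ℝ := d1 + d2 with hd3
  have hd2i : d2 i = 0 := by simp [hd2, hij]
  have hd1j : d1 j = 0 := by simp [hd1, hij.symm]
  have hd1k : d1 k = 0 := by simp [hd1, hik.symm]
  have hd2k : d2 k = 0 := by simp [hd2, hjk.symm]
  have hd1ne : d1 ≠ 0 := by
    intro h
    have := congrFun h i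
    simp [hd1, inv_ne_zero hβi] at this
  have hd12ne : d1 - d2 ≠ 0 := by
    intro h
    have := congrFun h i
    simp [Pi.sub_apply, hd2i, hd1, inv_ne_zero hβi] at this
  have hd3ne : d3 ≠ 0 := by
    intro h
    have := congrFun h i
    simp [hd3, Pi.add_apply, hd2i, hd1, inv_ne_zero hβi] at this
  -- sums
  have hmul1 : ∀ m, β m * d1 m = if m = i then 1 else 0 := by
    intro m; by_cases hm : m = i <;> simp [hd1, hm, mul_inv_cancel₀, hβi]
  have hmul2 : ∀ m, β m * d2 m = if m = j then 1 else 0 := by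
    intro m; by_cases hm : m = j <;> simp [hd2, hm, mul_inv_cancel₀, hβj]
  have s1 : ∑ m, β m * d1 m = 1 := by simp [hmul1]
  have s2 : ∑ m, β m * d2 m = 1 := by simp [hmul2]
  have s3 : ∑ m, β m * d3 m = 2 := by
    have : ∀ m, β m * d3 m = β m * d1 m + β m * d2 m := by
      intro m; simp [hd3, Pi.add_apply, mul_add]
    rw [Finset.sum_congr rfl fun m _ => this m, Finset.sum_add_distrib, s1, s2]; norm_num
  set A := quadQ S d1 with hA
  set B := quadQ S d2 with hB
  set D := (∑ a, ∑ b, d1 a * S a b * d2 b) + (∑ a, ∑ b, d2 a * S a b * d1 b) with hD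
  have hApos : 0 < A := quadQ_pos hS hd1ne
  have hDlt : D < A + B := by
    have := quadQ_pos hS hd12ne
    rw [quadQ_sub] at this
    linarith
  have hQ3 : quadQ S d3 = A + B + D := by rw [hd3, quadQ_add]
  have hQ3pos : 0 < quadQ S d3 := quadQ_pos hS hd3ne
  have hQ3lt : A + B + D < 4 * A := by linarith
  -- √(A+B+D) < 2 √A
  have hsq : Real.sqrt (A + B + D) < 2 * Real.sqrt A := by
    have h4 : Real.sqrt (A + B + D) < Real.sqrt ((2:ℝ)^2 * A) := by
      apply Real.sqrt_lt_sqrt (by rw [← hQ3]; exact hQ3pos.le)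
      linarith
    rwa [Real.sqrt_mul (by norm_num : (0:ℝ) ≤ (2:ℝ)^2), Real.sqrt_sq (by norm_num : (0:ℝ) ≤ 2)] at h4
  have hm0t0 : 1 / Real.sqrt A < 2 / Real.sqrt (A + B + D) := by
    rw [div_lt_div_iff₀ (Real.sqrt_pos.2 hApos) (Real.sqrt_pos.2 (by rw [← hQ3]; exact hQ3pos))]
    linarith
  -- perturbed vector
  set v : ℝ → (Fin n → ℝ) := fun ε => fun m => d3 m - (if m = k then ε * (β k)⁻¹ else 0) with hv
  have hv0 : v 0 = d3 := by funext m; simp [hv]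
  have hvc : Continuous v := by
    apply continuous_pi
    intro m
    by_cases hm : m = k <;> simp only [hv, hm, if_pos, if_neg, ite_true, ite_false] <;> fun_prop
  have hnum : ∀ ε, ∑ m, β m * v ε m = 2 - ε := by
    intro ε
    have : ∀ m, β m * v ε m = β m * d3 m - (if m = k then ε else 0) := by
      intro m
      by_cases hm : m = k
      · simp [hv, hm, mul_sub]
        field_simp
      · simp [hv, hm]
    rw [Finset.sum_congr rfl fun m _ => this m, Finset.sum_sub_distrib, s3]
    simp
  set φ : ℝ → ℝ := fun ε => (∑ m, β m * v ε m) / Real.sqrt (quadQ S (v ε)) with hφ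
  have hφ0 : φ 0 = 2 / Real.sqrt (A + B + D) := by
    simp only [hφ, hv0, hQ3, hnum]
    norm_num
  have hQvc : Continuous fun ε => quadQ S (v ε) := by
    unfold quadQ
    apply continuous_finset_sum; intro a _
    apply continuous_finset_sum; intro b _
    exact (((continuous_apply a).comp hvc).mul continuous_const).mul ((continuous_apply b).comp hvc)
  have hφc : ContinuousAt φ 0 := by
    apply ContinuousAt.div
    · apply Continuous.continuousAt
      apply continuous_finset_sum; intro m _
      exact continuous_const.mul ((continuous_apply m).comp hvc)
    · exact (Real.continuous_sqrt.comp hQvc).continuousAt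
    · rw [hv0]
      exact ne_of_gt (Real.sqrt_pos.2 hQ3pos)
  have hev : ∀ᶠ ε in nhds (0:ℝ), 1 / Real.sqrt A < φ ε := by
    have : Filter.Tendsto φ (nhds 0) (nhds (φ 0)) := hφc
    rw [hφ0] at this
    exact this.eventually_const_lt hm0t0
  obtain ⟨ε, hφε, hεpos⟩ :=
    ((eventually_nhdsWithin_of_eventually_nhds hev).and
      (eventually_mem_nhdsWithin (s := Set.Ioi (0:ℝ)))).exists
  rw [Set.mem_Ioi] at hεpos
  have hvεk : v ε k = -(ε * (β k)⁻¹) := by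
    simp [hv, hd3, Pi.add_apply, hd1k, hd2k]
  have hvεne : v ε ≠ 0 := by
    intro h
    have := congrFun h k
    rw [hvεk] at this
    simp [inv_ne_zero hβk, ne_of_gt hεpos] at this
  -- assemble
  refine ⟨d1, 0, v ε, 0, ?_, ?_, ?_⟩
  · constructor
    · intro m
      rw [hmul1 m]
      by_cases hm : m = i <;> simp [hm]
    · exact ⟨i, by rw [hmul1 i]; simp⟩
  · rintro ⟨h1, -⟩
    have h2 := h1 k
    rw [hvεk] at h2
    have hbk : β k * -(ε * (β k)⁻¹) = -ε := by
      field_simp <;> ring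
    rw [hbk] at h2
    simp only [Pi.zero_apply, mul_zero] at h2
    linarith
  · have e1 : ρ d1 0 = G (1 / Real.sqrt A) := by
      rw [hρ d1 0 hd1ne]
      simp only [Pi.zero_apply, sub_zero]
      rw [s1]
      rfl
    have e2 : ρ (v ε) 0 = G (φ ε) := by
      rw [hρ (v ε) 0 hvεne]
      simp only [Pi.zero_apply, sub_zero]
      rfl
    rw [e1, e2]
    exact hGmono hφε

/-- Proposition 11 (first part) — any linear differentiation model
with at least 3 nonzero attribute weights violates dominance. -/
theorem stmt_12 {n : ℕ} (ρ : (Fin n → ℝ) → (Fin n → ℝ) → ℝ)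
    (hrange : ∀ x y, ρ x y ∈ Set.Icc (0:ℝ) 1)
    (hsymm : ∀ x y, ρ x y = 1 - ρ y x)
    (β : Fin n → ℝ) (S : Matrix (Fin n) (Fin n) ℝ) (G : ℝ → ℝ)
    (hrep : IsLDMRep ρ β S G)
    (hβ : 3 ≤ (Finset.univ.filter (fun k => β k ≠ 0)).card) :
    ∃ x y w z : Fin n → ℝ, DomB β x y ∧ ¬ DomB β w z ∧ ρ x y < ρ w z := by
  obtain ⟨t, hts, htcard⟩ := Finset.exists_subset_card_eq hβ
  obtain ⟨a, b, c, hab, hac, hbc, rfl⟩ := Finset.card_eq_three.mp htcard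
  have hβa : β a ≠ 0 := (Finset.mem_filter.mp (hts (by simp))).2
  have hβb : β b ≠ 0 := (Finset.mem_filter.mp (hts (by simp))).2
  have hβc : β c ≠ 0 := (Finset.mem_filter.mp (hts (by simp))).2
  rcases le_total (quadQ S (fun m => if m = b then (β b)⁻¹ else 0))
      (quadQ S (fun m => if m = a then (β a)⁻¹ else 0)) with h | h
  · exact key_lemma ρ β S G hrep a b c hab hac hbc hβa hβb hβc h
  · exact key_lemma ρ β S G hrep b a c hab.symm hbc hac hβb hβa hβc h
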